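/- Let n ≥ 2 and let f : 𝔽₂ⁿ → 𝔽₂ be a nested canalizing function written in layered form f = M₁(M₂(⋯(M_{r−1}(M_r ⊕ 1) ⊕ 1)⋯) ⊕ 1) ⊕ b with layer sizes k₁,…,k_r. Then every variable belonging to the l-th layer M_l (for 1 ≤ l ≤ r) has the same activity, equal to A_l^f = (1/2^{n−1}) · Σ_{j=1}^{r−l+1} (−1)^{j−1} · 2^{n − (k₁+⋯+k_{j+l−1})}. -/

import Mathlib

/-- `f` is nested canalizing in the variable order `σ(0), σ(1), …, σ(n-1)`
with canalizing input values `a` and canalized output values `b`: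
`f x = b k` whenever `x (σ j) = a j + 1` for all `j < k` and `x (σ k) = a k`,
and `f x = b (last) + 1` whenever `x (σ j) = a j + 1` for all `j`. -/
def IsNCF {n : ℕ} (f : (Fin n → ZMod 2) → ZMod 2) (σ : Equiv.Perm (Fin n))
    (a b : Fin n → ZMod 2) : Prop :=
  (∀ (k : Fin n) (x : Fin n → ZMod 2),
      (∀ j : Fin n, j < k → x (σ j) = a j + 1) → x (σ k) = a k → f x = b k) ∧
  (∀ k : Fin n, (∀ j : Fin n, j ≤ k) →
      ∀ x : Fin n → ZMod 2, (∀ j : Fin n, x (σ j) = a j + 1) → f x = b k + 1)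

/-- The nested expression `M i * (M (i+1) * ( … * (M (i+t-1) + 1) … ) + 1)`
with `t` factors, i.e. `nestVal M t i = Mᵢ(M_{i+1}(⋯(M_{i+t-1} ⊕ 1)⋯) ⊕ 1)`. -/
def nestVal (M : ℕ → ZMod 2) : ℕ → ℕ → ZMod 2
  | 0, _ => 0
  | 1, i => M i
  | (t + 2), i => M i * (nestVal M (t + 1) (i + 1) + 1)

/-- The extended monomial of the `i`-th layer, given the layer assignment `L`
and the complemented inputs `a`:  `Mᵢ(x) = ∏_{L j = i} (x j ⊕ a j)`. -/
def layerMon {n r : ℕ} (L : Fin n → Fin r) (a : Fin n → ZMod 2) (i : ℕ)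
    (x : Fin n → ZMod 2) : ZMod 2 :=
  ∏ j ∈ Finset.univ.filter (fun j : Fin n => (L j : ℕ) = i), (x j + a j)

/-- `kᵢ`, the number of variables in the `i`-th layer. -/
def layerSize {n r : ℕ} (L : Fin n → Fin r) (i : ℕ) : ℕ :=
  (Finset.univ.filter (fun j : Fin n => (L j : ℕ) = i)).card

/-- `K_l = k₀ + k₁ + ⋯ + k_{l-1}`, the number of variables in the first `l` layers. -/
def layerSum {n r : ℕ} (L : Fin n → Fin r) (l : ℕ) : ℕ :=
  ∑ i ∈ Finset.range l, layerSize L i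

/-- `f` is given in the layered form
`f = M₁(M₂(⋯(M_{r−1}(M_r ⊕ 1) ⊕ 1)⋯) ⊕ 1) ⊕ b`, where the `Mᵢ` are extended
monomials in pairwise disjoint sets of variables comprising all `n` variables
(the variable set of `Mᵢ` being the `i`-th layer `{j | L j = i}`), every layer
is nonempty, and the last layer has at least two variables. -/
def IsLayeredForm {n r : ℕ} (f : (Fin n → ZMod 2) → ZMod 2)
    (L : Fin n → Fin r) (a : Fin n → ZMod 2) (b : ZMod 2) : Prop :=
  1 ≤ r ∧
  (∀ i : Fin r, 1 ≤ layerSize L (i : ℕ)) ∧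
  2 ≤ layerSize L (r - 1) ∧
  ∀ x : Fin n → ZMod 2, f x = nestVal (fun i => layerMon L a i x) r 0 + b

/-- The activity `λᵢᶠ = 2⁻ⁿ ∑_x (f(x with xᵢ flipped) ⊕ f(x))`, the Boolean
difference being regarded as the integer 0 or 1. -/
def activity {n : ℕ} (f : (Fin n → ZMod 2) → ZMod 2) (i : Fin n) : ℚ :=
  (1 / 2 ^ n) * ∑ x : Fin n → ZMod 2,
    ((f (Function.update x i (x i + 1)) + f x).val : ℚ)

/-- The average sensitivity `sᶠ = ∑ᵢ λᵢᶠ`. -/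
def avgSens {n : ℕ} (f : (Fin n → ZMod 2) → ZMod 2) : ℚ :=
  ∑ i : Fin n, activity f i

noncomputable def phi (z : ZMod 2) : ℚ := (z.val : ℚ)

lemma phi_mul (u v : ZMod 2) : phi (u * v) = phi u * phi v := by
  have h : ∀ u v : ZMod 2, (u * v).val = u.val * v.val := by decide
  unfold phi; rw [h]; push_cast; ring

lemma phi_add_one (u : ZMod 2) : phi (u + 1) = 1 - phi u := by
  have h : ∀ u : ZMod 2, (u+1).val + u.val = 1 := by decide
  have h2 : ((u+1).val : ℚ) + (u.val : ℚ) = 1 := by exact_mod_cast congrArg (Nat.cast : ℕ → ℚ) (h u)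
  unfold phi; linarith

lemma phi_one : phi 1 = 1 := by unfold phi; rw [show (1 : ZMod 2).val = 1 from rfl]; norm_num

lemma sum_zmod2 (F : ZMod 2 → ℚ) : ∑ v : ZMod 2, F v = F 0 + F 1 := by
  show ∑ v : Fin 2, F v = F 0 + F 1
  exact Fin.sum_univ_two F

lemma sum_phi_shift (c : ZMod 2) : ∑ v : ZMod 2, phi (v + c) = 1 := by
  rw [sum_zmod2]
  have h : ∀ c : ZMod 2, (0 + c).val + (1 + c).val = 1 := by decide
  have h2 : ((0+c).val : ℚ) + ((1+c).val : ℚ) = 1 := by exact_mod_cast congrArg (Nat.cast : ℕ → ℚ) (h c)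
  unfold phi; linarith

lemma sum_mul_indep {n : ℕ} (p : Fin n → Prop) [DecidablePred p]
    (g h : (Fin n → ZMod 2) → ℚ)
    (hg : ∀ x y : Fin n → ZMod 2, (∀ j, p j → x j = y j) → g x = g y)
    (hh : ∀ x y : Fin n → ZMod 2, (∀ j, ¬ p j → x j = y j) → h x = h y) :
    (2:ℚ)^n * ∑ x : Fin n → ZMod 2, g x * h x
      = (∑ x : Fin n → ZMod 2, g x) * (∑ x : Fin n → ZMod 2, h x) := by
  classical
  set e := (Equiv.piEquivPiSubtypeProd p (fun _ => ZMod 2)).symm with he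
  have hsum : ∀ F : (Fin n → ZMod 2) → ℚ,
      ∑ x : Fin n → ZMod 2, F x
        = ∑ z : (∀ j : {j // p j}, ZMod 2) × (∀ j : {j // ¬ p j}, ZMod 2), F (e z) := by
    intro F
    exact (Equiv.sum_comp e F).symm
  -- coordinate description of e
  have he1 : ∀ (u : ∀ j : {j // p j}, ZMod 2) (v : ∀ j : {j // ¬ p j}, ZMod 2)
      (j : Fin n) (hj : p j), e (u, v) j = u ⟨j, hj⟩ := by
    intro u v j hj
    simp [he, Equiv.piEquivPiSubtypeProd, hj]
  have he2 : ∀ (u : ∀ j : {j // p j}, ZMod 2) (v : ∀ j : {j // ¬ p j}, ZMod 2)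
      (j : Fin n) (hj : ¬ p j), e (u, v) j = v ⟨j, hj⟩ := by
    intro u v j hj
    simp [he, Equiv.piEquivPiSubtypeProd, hj]
  set G : (∀ j : {j // p j}, ZMod 2) → ℚ := fun u => g (e (u, fun _ => 0)) with hG
  set H : (∀ j : {j // ¬ p j}, ZMod 2) → ℚ := fun v => h (e (fun _ => 0, v)) with hH
  have hgG : ∀ u v, g (e (u, v)) = G u := by
    intro u v
    apply hg
    intro j hj
    rw [he1 _ _ _ hj, he1 _ _ _ hj]
  have hhH : ∀ u v, h (e (u, v)) = H v := by
    intro u v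
    apply hh
    intro j hj
    rw [he2 _ _ _ hj, he2 _ _ _ hj]
  have c1 : (Fintype.card {j // p j} : ℕ) + Fintype.card {j // ¬ p j} = n := by
    rw [Fintype.card_subtype_compl]
    have := Fintype.card_subtype_le p
    simp [Fintype.card_fin] at *
    omega
  rw [hsum (fun x => g x * h x), hsum g, hsum h]
  rw [Fintype.sum_prod_type, Fintype.sum_prod_type, Fintype.sum_prod_type]
  simp only [hgG, hhH]
  rw [Finset.sum_comm (f := fun (u : ∀ j : {j // p j}, ZMod 2) (v : ∀ j : {j // ¬ p j}, ZMod 2) => H v)]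
  simp only [Finset.sum_const, Finset.card_univ, nsmul_eq_mul, ← Finset.sum_mul, ← Finset.mul_sum]
  rw [Fintype.card_fun, Fintype.card_fun]
  have : ((2:ℚ) ^ n) = ((2 ^ Fintype.card {j // ¬ p j} : ℕ) : ℚ) * ((2 ^ Fintype.card {j // p j} : ℕ) : ℚ) := by
    push_cast
    rw [← pow_add, Nat.add_comm, c1]
  rw [this]
  push_cast
  ring_nf
  simp [ZMod.card]

lemma phi_prod {α : Type*} (s : Finset α) (f : α → ZMod 2) :
    phi (∏ j ∈ s, f j) = ∏ j ∈ s, phi (f j) := by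
  classical
  induction s using Finset.induction with
  | empty => simp [phi_one]
  | insert _ _ hx ih => simp [Finset.prod_insert hx, phi_mul, ih]

lemma sum_phi_mon {n : ℕ} (T : Finset (Fin n)) (c : Fin n → ZMod 2) :
    ∑ x : Fin n → ZMod 2, phi (∏ j ∈ T, (x j + c j)) = 2 ^ (n - T.card) := by
  classical
  have key : ∀ x : Fin n → ZMod 2,
      phi (∏ j ∈ T, (x j + c j)) = ∏ j : Fin n, (if j ∈ T then phi (x j + c j) else 1) := by
    intro x
    rw [phi_prod]
    rw [← Finset.prod_filter]
    congr 1
    simp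
  simp only [key]
  have := Finset.prod_univ_sum (t := fun _ : Fin n => (Finset.univ : Finset (ZMod 2)))
    (f := fun j v => if j ∈ T then phi (v + c j) else 1)
  rw [Fintype.piFinset_univ] at this
  rw [← this]
  have : ∀ j : Fin n, (∑ v : ZMod 2, if j ∈ T then phi (v + c j) else 1)
      = if j ∈ T then 1 else 2 := by
    intro j
    by_cases hj : j ∈ T <;> simp [hj, sum_phi_shift, ZMod.card]
  simp only [this]
  rw [Finset.prod_ite]
  simp [Finset.filter_mem_eq_inter, Finset.card_univ]
  have h1 : (Finset.univ.filter (fun j : Fin n => j ∈ T)).card = T.card := by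
    congr 1; ext j; simp
  have := Finset.card_filter_add_card_filter_not (s := (Finset.univ : Finset (Fin n)))
    (p := fun j => j ∈ T)
  rw [h1] at this
  simp only [Finset.card_univ, Fintype.card_fin] at this
  omega

lemma nestVal_succ (M : ℕ → ZMod 2) (t i : ℕ) :
    nestVal M (t + 1) i = M i * (nestVal M t (i + 1) + 1) := by
  cases t with
  | zero => show M i = M i * (0 + 1); ring
  | succ t => rfl

lemma nestVal_congr (M M' : ℕ → ZMod 2) (t : ℕ) :
    ∀ i, (∀ j, i ≤ j → M j = M' j) → nestVal M t i = nestVal M' t i := by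
  induction t with
  | zero => intro i _; rfl
  | succ t ih =>
      intro i hM
      rw [nestVal_succ, nestVal_succ, hM i le_rfl, ih (i+1) (fun j hj => hM j (by omega))]

lemma nestVal_diff (M M' : ℕ → ZMod 2) (l : ℕ) (hMl : ∀ j, j ≠ l → M j = M' j) :
    ∀ t i, i ≤ l → l < i + t →
      nestVal M t i + nestVal M' t i
        = (∏ j ∈ Finset.Ico i l, M j) * (M l + M' l) * (nestVal M (i + t - l - 1) (l + 1) + 1) := by
  intro t
  induction t with
  | zero => intro i h1 h2; omega
  | succ t ih =>
      intro i h1 h2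
      rcases eq_or_lt_of_le h1 with rfl | hlt
      · rw [nestVal_succ, nestVal_succ]
        have : nestVal M' t (i + 1) = nestVal M t (i + 1) := by
          apply nestVal_congr
          intro j hj
          exact (hMl j (by omega)).symm
        rw [this]
        rw [Finset.Ico_self, Finset.prod_empty]
        have : i + (t + 1) - i - 1 = t := by omega
        rw [this]
        ring
      · rw [nestVal_succ, nestVal_succ, hMl i (by omega)]
        have key := ih (i + 1) (by omega) (by omega)
        have e1 : i + 1 + t - l - 1 = i + (t + 1) - l - 1 := by omega
        rw [e1] at key
        have e2 : ∏ j ∈ Finset.Ico i l, M j = M i * ∏ j ∈ Finset.Ico (i+1) l, M j := by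
          rw [← Finset.prod_eq_prod_Ico_succ_bot (by omega : i < l)]
        rw [e2, hMl i (by omega)]
        have expand : M' i * (nestVal M t (i + 1) + 1) + M' i * (nestVal M' t (i + 1) + 1)
            = M' i * (nestVal M t (i + 1) + nestVal M' t (i + 1)) := by
          have : ∀ c z w : ZMod 2, c * (z + 1) + c * (w + 1) = c * (z + w) := by decide
          exact this _ _ _
        rw [expand, key]
        ring


section Layers
variable {n r : ℕ} (L : Fin n → Fin r) (a : Fin n → ZMod 2)

lemma card_filter_lt (m : ℕ) :
    (Finset.univ.filter (fun j : Fin n => (L j : ℕ) < m)).card = layerSum L m := by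
  classical
  unfold layerSum layerSize
  rw [Finset.card_eq_sum_card_fiberwise (f := fun j : Fin n => (L j : ℕ))
    (t := Finset.range m) (fun j hj => by simp at hj ⊢; omega)]
  apply Finset.sum_congr rfl
  intro b hb
  simp only [Finset.mem_range] at hb
  congr 1
  ext j
  simp only [Finset.mem_filter, Finset.mem_univ, true_and]
  constructor
  · rintro ⟨-, h2⟩; exact h2
  · intro hh; exact ⟨by omega, hh⟩

lemma layerSum_le (m : ℕ) : layerSum L m ≤ n := by
  rw [← card_filter_lt L m]
  exact le_trans (Finset.card_filter_le _ _) (by simp)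

lemma layerSum_r : layerSum L r = n := by
  rw [← card_filter_lt L r]
  have : (Finset.univ.filter (fun j : Fin n => (L j : ℕ) < r)) = Finset.univ := by
    ext j; simp [(L j).2]
  rw [this]; simp

lemma layerSize_le (m : ℕ) : layerSize L m ≤ n := by
  unfold layerSize
  exact le_trans (Finset.card_filter_le _ _) (by simp)

lemma layerSum_succ (m : ℕ) : layerSum L (m + 1) = layerSum L m + layerSize L m :=
  Finset.sum_range_succ _ _

lemma layerMon_congr (q : ℕ) (x y : Fin n → ZMod 2)
    (hxy : ∀ j : Fin n, (L j : ℕ) = q → x j = y j) :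
    layerMon L a q x = layerMon L a q y := by
  unfold layerMon
  apply Finset.prod_congr rfl
  intro j hj
  simp only [Finset.mem_filter, Finset.mem_univ, true_and] at hj
  rw [hxy j hj]

lemma sum_phi_layerMon (q : ℕ) :
    ∑ x : Fin n → ZMod 2, phi (layerMon L a q x) = 2 ^ (n - layerSize L q) := by
  unfold layerMon layerSize
  exact sum_phi_mon _ a

lemma sum_one_pow : ∑ _x : Fin n → ZMod 2, (1 : ℚ) = 2 ^ n := by
  rw [Finset.sum_const, Finset.card_univ, Fintype.card_fun, ZMod.card, Fintype.card_fin]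
  simp

lemma T_formula : ∀ (d m : ℕ), m + d = r →
    ∑ x : Fin n → ZMod 2, phi (nestVal (fun q => layerMon L a q x) d m + 1)
      = ∑ j ∈ Finset.range (d + 1),
          (-1:ℚ)^j * 2 ^ (layerSum L m + (n - layerSum L (m + j))) := by
  classical
  intro d
  induction d with
  | zero =>
      intro m hm
      have h1 : ∀ x : Fin n → ZMod 2,
          phi (nestVal (fun q => layerMon L a q x) 0 m + 1) = 1 := by
        intro x
        show phi ((0 : ZMod 2) + 1) = 1
        rw [zero_add, phi_one]
      simp only [h1]
      rw [sum_one_pow]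
      subst hm
      simp [layerSum_r, Nat.sub_self]
  | succ d ih =>
      intro m hm
      have hIH := ih (m + 1) (by omega)
      have hstep : ∀ x : Fin n → ZMod 2,
          phi (nestVal (fun q => layerMon L a q x) (d + 1) m + 1)
            = 1 - phi (layerMon L a m x)
                * phi (nestVal (fun q => layerMon L a q x) d (m + 1) + 1) := by
        intro x
        rw [nestVal_succ, phi_add_one, phi_mul]
      simp only [hstep]
      rw [Finset.sum_sub_distrib, sum_one_pow]
      have hindep := sum_mul_indep (fun j : Fin n => (L j : ℕ) = m)
        (fun x => phi (layerMon L a m x))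
        (fun x => phi (nestVal (fun q => layerMon L a q x) d (m + 1) + 1))
        (by
          intro x y hxy
          show phi (layerMon L a m x) = phi (layerMon L a m y)
          rw [layerMon_congr L a m x y hxy])
        (by
          intro x y hxy
          show phi (nestVal (fun q => layerMon L a q x) d (m + 1) + 1)
              = phi (nestVal (fun q => layerMon L a q y) d (m + 1) + 1)
          have : ∀ q, m + 1 ≤ q →
              layerMon L a q x = layerMon L a q y := by
            intro q hq
            apply layerMon_congr
            intro j hj
            exact hxy j (by omega)
          rw [nestVal_congr (fun q => layerMon L a q x) (fun q => layerMon L a q y) d (m+1)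
            (fun j hj => this j hj)])
      have hindep2 : (2:ℚ) ^ n * ∑ x : Fin n → ZMod 2,
            phi (layerMon L a m x) * phi (nestVal (fun q => layerMon L a q x) d (m + 1) + 1)
          = 2 ^ (n - layerSize L m) *
            ∑ j ∈ Finset.range (d + 1),
              (-1:ℚ)^j * 2 ^ (layerSum L (m + 1) + (n - layerSum L (m + 1 + j))) := by
        rw [← sum_phi_layerMon L a m, ← hIH]
        exact hindep
      have hpow2 : (2:ℚ) ^ n ≠ 0 := by positivity
      have hKm : layerSum L m ≤ n := layerSum_le L m
      apply mul_left_cancel₀ hpow2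
      rw [mul_sub, hindep2]
      have hF0 : ((-1:ℚ))^0 * 2 ^ (layerSum L m + (n - layerSum L (m + 0))) = 2 ^ n := by
        simp only [Nat.add_zero, pow_zero, one_mul]
        congr 1
        omega
      have hRHS : ∑ j ∈ Finset.range (d + 1 + 1),
            (-1:ℚ)^j * 2 ^ (layerSum L m + (n - layerSum L (m + j)))
          = 2 ^ n + ∑ j ∈ Finset.range (d + 1),
            (-1:ℚ)^(j+1) * 2 ^ (layerSum L m + (n - layerSum L (m + (j+1)))) := by
        rw [Finset.sum_range_succ', hF0]
        ring
      rw [hRHS]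
      have hterm : ∀ j ∈ Finset.range (d + 1),
          (2:ℚ) ^ (n - layerSize L m)
              * ((-1:ℚ)^j * 2 ^ (layerSum L (m+1) + (n - layerSum L (m + 1 + j))))
            = -((2:ℚ) ^ n * ((-1:ℚ)^(j+1) * 2 ^ (layerSum L m + (n - layerSum L (m + (j+1)))))) := by
        intro j hj
        have hks : layerSize L m ≤ n := layerSize_le L m
        have hsucc : layerSum L (m+1) = layerSum L m + layerSize L m := layerSum_succ L m
        have hidx : m + 1 + j = m + (j + 1) := by omega
        rw [hidx]
        have h2 : (2:ℚ) ^ (n - layerSize L m) * 2 ^ (layerSum L (m+1) + (n - layerSum L (m + (j+1))))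
            = 2 ^ n * 2 ^ (layerSum L m + (n - layerSum L (m + (j+1)))) := by
          rw [← pow_add, ← pow_add]; congr 1; omega
        calc (2:ℚ) ^ (n - layerSize L m) * ((-1:ℚ)^j * 2 ^ (layerSum L (m+1) + (n - layerSum L (m + (j+1)))))
            = (2 ^ (n - layerSize L m) * 2 ^ (layerSum L (m+1) + (n - layerSum L (m + (j+1))))) * (-1)^j := by ring
          _ = (2 ^ n * 2 ^ (layerSum L m + (n - layerSum L (m + (j+1))))) * (-1)^j := by rw [h2]
          _ = -((2:ℚ) ^ n * ((-1:ℚ)^(j+1) * 2 ^ (layerSum L m + (n - layerSum L (m + (j+1)))))) := by ring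
      rw [Finset.mul_sum, Finset.sum_congr rfl hterm, Finset.sum_neg_distrib, mul_add,
        Finset.mul_sum]
      ring
  end Layers

/-- Every variable in the `l`-th layer of a nested canalizing function in
layered form has the same activity
`A_l = 2^{-(n−1)} Σ_{j=1}^{r−l+1} (−1)^{j−1} 2^{n−(k₁+⋯+k_{j+l−1})}`
(here layers are indexed from 0, so the 0-indexed layer `l` corresponds to
the paper's layer `l+1`). -/
theorem statement13 {n r : ℕ} (hn : 2 ≤ n) (f : (Fin n → ZMod 2) → ZMod 2)
    (L : Fin n → Fin r) (a : Fin n → ZMod 2) (b : ZMod 2)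
    (h : IsLayeredForm f L a b) (l : Fin r) (i : Fin n) (hi : L i = l) :
    activity f i = (1 / 2 ^ (n - 1)) *
      ∑ j ∈ Finset.range (r - (l : ℕ)),
        (-1 : ℚ) ^ j * 2 ^ (n - layerSum L (j + (l : ℕ) + 1)) := by
  classical
  obtain ⟨hr, hk, -, hf⟩ := h
  have hl : (l : ℕ) < r := l.2
  have hinat : (L i : ℕ) = (l : ℕ) := by rw [hi]
  set lnat := (l : ℕ) with hln
  set S : Finset (Fin n) :=
    (Finset.univ.filter (fun j : Fin n => (L j : ℕ) ≤ lnat)).erase i with hS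
  -- Step 1: pointwise formula for the boolean derivative
  have hdf : ∀ x : Fin n → ZMod 2,
      f (Function.update x i (x i + 1)) + f x
        = (∏ j ∈ S, (x j + a j)) *
            (nestVal (fun q => layerMon L a q x) (r - lnat - 1) (lnat + 1) + 1) := by
    intro x
    rw [hf, hf]
    have hbb : ∀ A B c : ZMod 2, (A + c) + (B + c) = A + B := by decide
    rw [hbb]
    have hsame : ∀ q : ℕ, q ≠ lnat →
        layerMon L a q (Function.update x i (x i + 1)) = layerMon L a q x := by
      intro q hq
      apply layerMon_congr
      intro j hj
      have hji : j ≠ i := by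
        intro e; rw [e, hinat] at hj; exact hq hj.symm
      rw [Function.update_of_ne hji]
    have hdiff2 : nestVal (fun q => layerMon L a q x) r 0
          + nestVal (fun q => layerMon L a q (Function.update x i (x i + 1))) r 0
        = (∏ q ∈ Finset.Ico 0 lnat, layerMon L a q x)
            * (layerMon L a lnat x + layerMon L a lnat (Function.update x i (x i + 1)))
            * (nestVal (fun q => layerMon L a q x) (0 + r - lnat - 1) (lnat + 1) + 1) :=
      nestVal_diff (fun q => layerMon L a q x)
        (fun q => layerMon L a q (Function.update x i (x i + 1))) lnat
        (fun q hq => (hsame q hq).symm) r 0 (by omega) (by omega)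
    rw [add_comm (nestVal (fun q => layerMon L a q (Function.update x i (x i + 1))) r 0),
      hdiff2]
    have h0r : 0 + r - lnat - 1 = r - lnat - 1 := by omega
    rw [h0r]
    -- flip part
    have hiT : i ∈ Finset.univ.filter (fun j : Fin n => (L j : ℕ) = lnat) := by
      simp [hinat]
    have hflip : layerMon L a lnat x + layerMon L a lnat (Function.update x i (x i + 1))
        = ∏ j ∈ (Finset.univ.filter (fun j : Fin n => (L j : ℕ) = lnat)).erase i,
            (x j + a j) := by
      unfold layerMon
      rw [← Finset.mul_prod_erase _ _ hiT, ← Finset.mul_prod_erase _ _ hiT,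
        Function.update_self]
      have herase : ∏ j ∈ (Finset.univ.filter (fun j : Fin n => (L j : ℕ) = lnat)).erase i,
            (Function.update x i (x i + 1) j + a j)
          = ∏ j ∈ (Finset.univ.filter (fun j : Fin n => (L j : ℕ) = lnat)).erase i,
            (x j + a j) :=
        Finset.prod_congr rfl (fun j hj => by
          rw [Function.update_of_ne (Finset.ne_of_mem_erase hj)])
      rw [herase]
      have key : ∀ z w P : ZMod 2, (z + w) * P + (z + 1 + w) * P = P := by decide
      exact key _ _ _
    -- prefix part
    have hpre : ∏ q ∈ Finset.Ico 0 lnat, layerMon L a q x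
        = ∏ j ∈ Finset.univ.filter (fun j : Fin n => (L j : ℕ) < lnat), (x j + a j) := by
      rw [← Finset.range_eq_Ico]
      rw [← Finset.prod_fiberwise_of_maps_to (g := fun j : Fin n => (L j : ℕ))
        (t := Finset.range lnat)
        (fun j hj => by
          simp only [Finset.mem_filter, Finset.mem_univ, true_and] at hj
          simp only [Finset.mem_range]
          exact hj)
        (fun j => x j + a j)]
      refine Finset.prod_congr rfl (fun q hq => ?_)
      unfold layerMon
      refine Finset.prod_congr ?_ (fun _ _ => rfl)
      ext j
      simp only [Finset.mem_filter, Finset.mem_univ, true_and, Finset.mem_range] at hq ⊢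
      omega
    rw [hflip, hpre]
    -- union of index sets
    have hdisj : Disjoint (Finset.univ.filter (fun j : Fin n => (L j : ℕ) < lnat))
        ((Finset.univ.filter (fun j : Fin n => (L j : ℕ) = lnat)).erase i) := by
      rw [Finset.disjoint_left]
      intro j hj1 hj2
      simp only [Finset.mem_filter, Finset.mem_univ, true_and] at hj1
      have := Finset.mem_of_mem_erase hj2
      simp only [Finset.mem_filter, Finset.mem_univ, true_and] at this
      omega
    have hunion : (∏ j ∈ Finset.univ.filter (fun j : Fin n => (L j : ℕ) < lnat), (x j + a j))
        * ∏ j ∈ (Finset.univ.filter (fun j : Fin n => (L j : ℕ) = lnat)).erase i, (x j + a j)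
        = ∏ j ∈ S, (x j + a j) := by
      rw [← Finset.prod_union hdisj]
      refine Finset.prod_congr ?_ (fun _ _ => rfl)
      ext j
      simp only [Finset.mem_union, Finset.mem_erase, Finset.mem_filter, Finset.mem_univ,
        true_and, hS]
      by_cases hji : j = i
      · subst hji
        simp only [hinat]
        constructor
        · rintro (h1 | ⟨h1, -⟩) <;> omega
        · rintro ⟨h1, -⟩; omega
      · constructor
        · rintro (h1 | ⟨-, h2⟩)
          · exact ⟨hji, by omega⟩
          · exact ⟨hji, by omega⟩
        · rintro ⟨-, h2⟩
          rcases Nat.lt_or_ge (L j : ℕ) lnat with h3 | h3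
          · exact Or.inl h3
          · exact Or.inr ⟨hji, by omega⟩
    rw [mul_assoc, ← mul_assoc, hunion]
  -- Step 2: summing
  have hact : activity f i = (1/2^n) * ∑ x : Fin n → ZMod 2,
      phi (∏ j ∈ S, (x j + a j))
        * phi (nestVal (fun q => layerMon L a q x) (r - lnat - 1) (lnat + 1) + 1) := by
    unfold activity
    congr 1
    refine Finset.sum_congr rfl (fun x _ => ?_)
    show phi (f (Function.update x i (x i + 1)) + f x) = _
    rw [hdf x, phi_mul]
  have hindep := sum_mul_indep (fun j : Fin n => (L j : ℕ) ≤ lnat)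
    (fun x => phi (∏ j ∈ S, (x j + a j)))
    (fun x => phi (nestVal (fun q => layerMon L a q x) (r - lnat - 1) (lnat + 1) + 1))
    (by
      intro x y hxy
      show phi (∏ j ∈ S, (x j + a j)) = phi (∏ j ∈ S, (y j + a j))
      congr 1
      refine Finset.prod_congr rfl (fun j hj => ?_)
      have hpj : (L j : ℕ) ≤ lnat := by
        have h2 := Finset.mem_of_mem_erase (hS ▸ hj)
        simpa using h2
      rw [hxy j hpj])
    (by
      intro x y hxy
      show phi (nestVal (fun q => layerMon L a q x) (r - lnat - 1) (lnat + 1) + 1)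
          = phi (nestVal (fun q => layerMon L a q y) (r - lnat - 1) (lnat + 1) + 1)
      congr 1
      rw [nestVal_congr (fun q => layerMon L a q x) (fun q => layerMon L a q y)
        (r - lnat - 1) (lnat + 1)
        (fun q hq => layerMon_congr L a q x y (fun j hj => hxy j (by omega)))])
  have hT := T_formula L a (r - lnat - 1) (lnat + 1) (by omega)
  have hcard_le : (Finset.univ.filter (fun j : Fin n => (L j : ℕ) ≤ lnat)).card
      = layerSum L (lnat + 1) := by
    rw [← card_filter_lt L (lnat + 1)]
    congr 1
    ext j
    simp only [Finset.mem_filter, Finset.mem_univ, true_and]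
    omega
  have hiS : i ∈ Finset.univ.filter (fun j : Fin n => (L j : ℕ) ≤ lnat) := by
    simp [hinat]
  have hScard : S.card = layerSum L (lnat + 1) - 1 := by
    rw [hS, Finset.card_erase_of_mem hiS, hcard_le]
  have hindep2 : (2:ℚ) ^ n * ∑ x : Fin n → ZMod 2,
        phi (∏ j ∈ S, (x j + a j))
          * phi (nestVal (fun q => layerMon L a q x) (r - lnat - 1) (lnat + 1) + 1)
      = 2 ^ (n - (layerSum L (lnat + 1) - 1)) *
        ∑ j ∈ Finset.range (r - lnat - 1 + 1),
          (-1:ℚ)^j * 2 ^ (layerSum L (lnat + 1) + (n - layerSum L (lnat + 1 + j))) := by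
    rw [← hScard, ← sum_phi_mon S a, ← hT]
    exact hindep
  -- final arithmetic
  have h2n : (2:ℚ)^n ≠ 0 := by positivity
  have hsum2 : ∑ x : Fin n → ZMod 2,
        phi (∏ j ∈ S, (x j + a j))
          * phi (nestVal (fun q => layerMon L a q x) (r - lnat - 1) (lnat + 1) + 1)
      = (2 ^ (n - (layerSum L (lnat + 1) - 1)) *
        ∑ j ∈ Finset.range (r - lnat - 1 + 1),
          (-1:ℚ)^j * 2 ^ (layerSum L (lnat + 1) + (n - layerSum L (lnat + 1 + j)))) / 2^n := by
    rw [eq_div_iff h2n]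
    linear_combination hindep2
  rw [hact, hsum2]
  rw [show r - lnat - 1 + 1 = r - lnat from by omega]
  rw [Finset.mul_sum, Finset.sum_div, Finset.mul_sum, Finset.mul_sum]
  refine Finset.sum_congr rfl (fun j hj => ?_)
  simp only [Finset.mem_range] at hj
  have hK1 : 1 ≤ layerSum L (lnat + 1) := by
    have h1 : 1 ≤ layerSize L lnat := hk l
    have h2 := layerSum_succ L lnat
    omega
  have hKn : layerSum L (lnat + 1) ≤ n := layerSum_le L _
  have hKjn : layerSum L (lnat + 1 + j) ≤ n := layerSum_le L _
  rw [show lnat + 1 + j = j + lnat + 1 from by omega]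
  have hexp : (2:ℚ) ^ (n - (layerSum L (lnat + 1) - 1))
        * 2 ^ (layerSum L (lnat + 1) + (n - layerSum L (j + lnat + 1))) * 2 ^ (n - 1)
      = 2 ^ (n - layerSum L (j + lnat + 1)) * (2 ^ n * 2 ^ n) := by
    have hjn : layerSum L (j + lnat + 1) ≤ n := by
      rw [show j + lnat + 1 = lnat + 1 + j from by omega]; exact hKjn
    rw [← pow_add, ← pow_add, ← pow_add, ← pow_add]
    congr 1
    omega
  have h2n1 : (2:ℚ)^(n-1) ≠ 0 := by positivity
  field_simp
  linear_combination hexp
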